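/- Let δ, R > 0, let ω ⊂ ℍ² be a Borel set that is (δ,R)-thick, and let R' > 0 satisfy tanh R = min(1 − 2^{−R'}, (3/2)^{R'} − 1). Then for every (j,k) ∈ ℤ², ∫_{ω ∩ 𝓡_{j,k}(R')} dx dy / y² ≥ δ. -/

import Mathlib

open MeasureTheory Real Set

/-- Inverse hyperbolic cosine. -/
noncomputable def arcoshR (x : ℝ) : ℝ := Real.log (x + Real.sqrt (x ^ 2 - 1))

/-- The hyperbolic half-plane, as a subset of `ℝ × ℝ`. -/
def H2 : Set (ℝ × ℝ) := {z | 0 < z.2}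

/-- The geodesic distance on the hyperbolic half-plane. -/
noncomputable def hypDist (z z' : ℝ × ℝ) : ℝ :=
  arcoshR (1 + ((z.1 - z'.1) ^ 2 + (z.2 - z'.2) ^ 2) / (2 * z.2 * z'.2))

/-- The open geodesic ball of center `z` and radius `r`. -/
def hypBall (z : ℝ × ℝ) (r : ℝ) : Set (ℝ × ℝ) := {z' ∈ H2 | hypDist z z' < r}

/-- The Riemannian measure `dvol_g = dx dy / y²` of the hyperbolic half-plane. -/
noncomputable def volG : Measure (ℝ × ℝ) :=
  (volume : Measure (ℝ × ℝ)).withDensity fun z => ENNReal.ofReal (z.2 ^ 2)⁻¹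

/-- The rectangle `𝓡_{j,k}(R')`. -/
noncomputable def rect (R' : ℝ) (j k : ℤ) : Set (ℝ × ℝ) :=
  {z | |z.1 - (2 : ℝ) ^ (R' * (j : ℝ)) * (k : ℝ)| < (2 : ℝ) ^ (R' * (j : ℝ)) ∧
       (2 : ℝ) ^ (R' * ((j : ℝ) - 1)) < z.2 ∧
       z.2 < (3 : ℝ) ^ R' * (2 : ℝ) ^ (R' * ((j : ℝ) - 1))}

lemma lt_cosh_of_arcoshR_lt {x R : ℝ} (hx : 1 ≤ x) (h : arcoshR x < R) : x < Real.cosh R := by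
  set s := Real.sqrt (x ^ 2 - 1) with hs
  have hs0 : 0 ≤ s := Real.sqrt_nonneg _
  have hs2 : s ^ 2 = x ^ 2 - 1 := Real.sq_sqrt (by nlinarith)
  have ht1 : (1:ℝ) ≤ x + s := by linarith
  have ht : x + s < Real.exp R :=
    (Real.log_lt_iff_lt_exp (by linarith : (0:ℝ) < x + s)).mp h
  have hE1 : (1:ℝ) < Real.exp R := lt_of_le_of_lt ht1 ht
  rw [Real.cosh_eq]
  have hEe : Real.exp (-R) * Real.exp R = 1 := by rw [← Real.exp_add]; simp
  have hEt : 1 < Real.exp R * (x + s) := by nlinarith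
  nlinarith [mul_pos (sub_pos.2 ht) (sub_pos.2 hEt)]

set_option maxHeartbeats 1600000 in
/-- If `ω` is a `(δ,R)`-thick Borel subset of the hyperbolic half-plane and
`tanh R = min(1 - 2^{-R'}, (3/2)^{R'} - 1)`, then every rectangle `𝓡_{j,k}(R')` meets `ω`
in a set of hyperbolic measure at least `δ`. -/
theorem thick_implies_rect_lower_bound (δ R R' : ℝ) (hδ : 0 < δ) (hR : 0 < R) (hR' : 0 < R')
    (ω : Set (ℝ × ℝ)) (hω : MeasurableSet ω) (hωH2 : ω ⊆ H2)
    (hthick : ∀ z : ℝ × ℝ, 0 < z.2 → ENNReal.ofReal δ ≤ volG (ω ∩ hypBall z R))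
    (htanh : Real.tanh R = min (1 - (2 : ℝ) ^ (-R')) (((3 : ℝ) / 2) ^ R' - 1)) :
    ∀ j k : ℤ, ENNReal.ofReal δ ≤ volG (ω ∩ rect R' j k) := by
  intro j k
  set a : ℝ := (2 : ℝ) ^ (R' * (j : ℝ)) with ha
  have ha0 : 0 < a := Real.rpow_pos_of_pos two_pos _
  set T := Real.tanh R with hTdef
  set C := Real.cosh R with hCdef
  set S := Real.sinh R with hSdef
  clear_value a T C S
  have hT1 : T ≤ 1 - (2:ℝ) ^ (-R') := htanh ▸ min_le_left _ _
  have hT2 : T ≤ ((3:ℝ)/2) ^ R' - 1 := htanh ▸ min_le_right _ _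
  have hC0 : 0 < C := hCdef ▸ Real.cosh_pos R
  have hTpos : 0 < T := by
    rw [hTdef, Real.tanh_eq_sinh_div_cosh]
    exact div_pos (Real.sinh_pos_iff.2 hR) (Real.cosh_pos R)
  have h2R' : (0:ℝ) < (2:ℝ) ^ (-R') := Real.rpow_pos_of_pos two_pos _
  have hTlt1 : T < 1 := by linarith
  have hS : T * C = S := by
    rw [hTdef, Real.tanh_eq_sinh_div_cosh]
    field_simp
    rw [hSdef, hCdef]
    ring
  have hsq : C ^ 2 = S ^ 2 + 1 := by rw [hCdef, hSdef]; exact Real.cosh_sq R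
  have hident : C ^ 2 * T ^ 2 = C ^ 2 - 1 := by linear_combination (T * C + S) * hS - hsq
  set y₀ : ℝ := a / C with hy₀def
  have hy₀ : 0 < y₀ := div_pos ha0 hC0
  have hy₀C : y₀ * C = a := div_mul_cancel₀ a (ne_of_gt hC0)
  clear_value y₀
  -- the ball is contained in the rectangle
  have hsub : hypBall (a * (k:ℝ), y₀) R ⊆ rect R' j k := by
    rintro ⟨x', y'⟩ ⟨hy', hd⟩
    simp only [rect, Set.mem_setOf_eq]
    rw [← ha]
    have hy'0 : (0:ℝ) < y' := hy'
    simp only [hypDist] at hd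
    have hden : 0 < 2 * y₀ * y' := by positivity
    have hu1 : (1:ℝ) ≤ 1 + ((a * (k:ℝ) - x') ^ 2 + (y₀ - y') ^ 2) / (2 * y₀ * y') := by
      have : (0:ℝ) ≤ ((a * (k:ℝ) - x') ^ 2 + (y₀ - y') ^ 2) / (2 * y₀ * y') := by positivity
      linarith
    have hlt := lt_cosh_of_arcoshR_lt hu1 hd
    rw [← hCdef] at hlt
    have hD : (a * (k:ℝ) - x') ^ 2 + (y₀ - y') ^ 2 < (C - 1) * (2 * y₀ * y') := by
      rw [← sub_pos] at hlt ⊢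
      have := (div_lt_iff₀ hden).mp (by linarith : ((a * (k:ℝ) - x') ^ 2 + (y₀ - y') ^ 2) / (2 * y₀ * y') < C - 1)
      linarith
    have hkey : (x' - a * (k:ℝ)) ^ 2 + (y' - a) ^ 2 < (a * T) ^ 2 := by
      rw [← hy₀C]
      have hid2 : (y₀ * C * T) ^ 2 = y₀ ^ 2 * C ^ 2 - y₀ ^ 2 := by
        linear_combination y₀ ^ 2 * hident
      rw [← hy₀C] at hD
      nlinarith [hD, hid2]
    have haT : 0 < a * T := mul_pos ha0 hTpos
    have hTsq : T ^ 2 < 1 := by nlinarith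
    have haTa : (a * T) ^ 2 < a ^ 2 := by nlinarith [mul_pos ha0 ha0]
    have hyabs := abs_lt.1 (abs_lt_of_sq_lt_sq
      (show (y' - a) ^ 2 < (a * T) ^ 2 by linarith [hkey, sq_nonneg (x' - a * (k:ℝ))]) haT.le)
    refine ⟨?_, ?_, ?_⟩
    · show |x' - a * (k:ℝ)| < a
      refine abs_lt_of_sq_lt_sq ?_ ha0.le
      linarith [hkey, sq_nonneg (y' - a), haTa]
    · show (2:ℝ) ^ (R' * ((j:ℝ) - 1)) < y'
      have hab : (2:ℝ) ^ (R' * ((j:ℝ) - 1)) = a * (2:ℝ) ^ (-R') := by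
        rw [ha, ← Real.rpow_add two_pos]
        congr 1; ring
      rw [hab]
      have h1 : a * (2:ℝ) ^ (-R') ≤ a * (1 - T) :=
        mul_le_mul_of_nonneg_left (by linarith) ha0.le
      nlinarith [hyabs.1]
    · show y' < (3:ℝ) ^ R' * (2:ℝ) ^ (R' * ((j:ℝ) - 1))
      have hab2 : (3:ℝ) ^ R' * (2:ℝ) ^ (R' * ((j:ℝ) - 1)) = a * ((3:ℝ)/2) ^ R' := by
        rw [Real.div_rpow (by norm_num : (0:ℝ) ≤ 3) (by norm_num : (0:ℝ) ≤ 2), ha,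
          show R' * ((j:ℝ) - 1) = R' * (j:ℝ) - R' by ring, Real.rpow_sub two_pos]
        ring
      rw [hab2]
      have h1 : a * (1 + T) ≤ a * ((3:ℝ)/2) ^ R' :=
        mul_le_mul_of_nonneg_left (by linarith) ha0.le
      nlinarith [hyabs.2]
  calc ENNReal.ofReal δ ≤ volG (ω ∩ hypBall (a * (k:ℝ), y₀) R) := hthick _ hy₀
    _ ≤ volG (ω ∩ rect R' j k) := measure_mono (inter_subset_inter_right _ hsub)
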